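/- If Γ is a d-closure (Γ = Δ_d(Γ)) on [n], then Γ is chordal if and only if Γ is d-chordal. -/

import Mathlib

namespace ChordalPaper

/-- A simplicial complex on vertex set `Fin n`: a family of finsets closed under subsets. -/
def IsComplex {n : ℕ} (Γ : Set (Finset (Fin n))) : Prop :=
  ∀ F ∈ Γ, ∀ F' ⊆ F, F' ∈ Γ

/-- The `d`-closure `Δ_d(Γ)`: all subsets of size `≤ d`, together with all subsets
all of whose `(d+1)`-element subsets are faces of `Γ`. -/
def dClosure {n : ℕ} (d : ℕ) (Γ : Set (Finset (Fin n))) : Set (Finset (Fin n)) :=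
  {F | F.card ≤ d ∨ ∀ G ⊆ F, G.card = d + 1 → G ∈ Γ}

/-- The pure `(d-1)`-skeleton `⟨[n]⟩^{[d-1]}` of the full simplex: all subsets of size `≤ d`. -/
def fullSkel (n d : ℕ) : Set (Finset (Fin n)) := {F | F.card ≤ d}

/-- A facet: a maximal face. -/
def IsFacet {n : ℕ} (Γ : Set (Finset (Fin n))) (F : Finset (Fin n)) : Prop :=
  F ∈ Γ ∧ ∀ G ∈ Γ, F ⊆ G → G = F

/-- A free face: a face contained in a unique facet. -/
def IsFreeFace {n : ℕ} (Γ : Set (Finset (Fin n))) (E : Finset (Fin n)) : Prop :=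
  E ∈ Γ ∧ ∃! F, IsFacet Γ F ∧ E ⊆ F

/-- Collapse at `E`: remove all faces containing `E` (including `E` itself). -/
def collapseFace {n : ℕ} (Γ : Set (Finset (Fin n))) (E : Finset (Fin n)) :
    Set (Finset (Fin n)) := {F ∈ Γ | ¬ E ⊆ F}

/-- Successive collapses along a list of faces. -/
def collapseList {n : ℕ} (Γ : Set (Finset (Fin n))) :
    List (Finset (Fin n)) → Set (Finset (Fin n))
  | [] => Γ
  | E :: L => collapseList (collapseFace Γ E) L

/-- A free sequence: each face is free in the complex obtained by collapsing the previous ones. -/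
def IsFreeSeq {n : ℕ} (Γ : Set (Finset (Fin n))) : List (Finset (Fin n)) → Prop
  | [] => True
  | E :: L => IsFreeFace Γ E ∧ IsFreeSeq (collapseFace Γ E) L

/-- `d`-collapsibility: a sequence of elementary `d`-collapsings (at free faces of
dimension `< d`, i.e. cardinality `≤ d`) reduces `Γ` to the void complex. -/
def Collapsible {n : ℕ} (d : ℕ) (Γ : Set (Finset (Fin n))) : Prop :=
  ∃ L : List (Finset (Fin n)),
    IsFreeSeq Γ L ∧ (∀ E ∈ L, E.card ≤ d) ∧ collapseList Γ L = ∅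

/-- Simplicial deletion `Γ∖E`: remove all faces strictly containing `E` (keeping `E`). -/
def srDel {n : ℕ} (Γ : Set (Finset (Fin n))) (E : Finset (Fin n)) :
    Set (Finset (Fin n)) := {F ∈ Γ | ¬ E ⊂ F}

/-- Successive simplicial deletions along a list of faces. -/
def srDelList {n : ℕ} (Γ : Set (Finset (Fin n))) :
    List (Finset (Fin n)) → Set (Finset (Fin n))
  | [] => Γ
  | E :: L => srDelList (srDel Γ E) L

/-- A simplicial order for a `d`-closure on `Fin n`: a sequence of non-facet free faces of
cardinality `d` whose successive simplicial deletions reduce the complex to the pure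
`(d-1)`-skeleton of the full simplex. -/
def IsSimpOrder {n : ℕ} (d : ℕ) (Γ : Set (Finset (Fin n))) :
    List (Finset (Fin n)) → Prop
  | [] => Γ = fullSkel n d
  | E :: L => E.card = d ∧ IsFreeFace Γ E ∧ ¬ IsFacet Γ E ∧ IsSimpOrder d (srDel Γ E) L

/-- `Γ` is `d`-chordal: its `d`-closure equals the pure `(d-1)`-skeleton of the full
simplex or admits a simplicial order. -/
def DChordal {n : ℕ} (d : ℕ) (Γ : Set (Finset (Fin n))) : Prop :=
  ∃ L, IsSimpOrder d (dClosure d Γ) L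

/-- A minimal nonface of `Γ`. -/
def IsMinNonface {n : ℕ} (Γ : Set (Finset (Fin n))) (F : Finset (Fin n)) : Prop :=
  F ∉ Γ ∧ ∀ G ⊂ F, G ∈ Γ

end ChordalPaper

namespace Stmt10Aux
open ChordalPaper

variable {n : ℕ}

/-! ### binary weight -/

def nu (S : Finset (Fin n)) : ℕ := ∑ x ∈ S, 2 ^ (x : ℕ)

lemma sum_range_two_pow (x : ℕ) : ∑ i ∈ Finset.range x, 2 ^ i = 2 ^ x - 1 := by
  induction x with
  | zero => simp
  | succ k ih =>
    rw [Finset.sum_range_succ, ih, pow_succ]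
    have h : 1 ≤ 2 ^ k := Nat.one_le_two_pow
    omega

lemma nu_lt_two_pow {S : Finset (Fin n)} {x : ℕ} (h : ∀ b ∈ S, (b : ℕ) < x) :
    nu S < 2 ^ x := by
  have h1 : ∑ i ∈ S.image (fun b : Fin n => (b : ℕ)), 2 ^ i = nu S :=
    Finset.sum_image (fun a _ b _ hab => Fin.val_injective hab)
  have h2 : S.image (fun b : Fin n => (b : ℕ)) ⊆ Finset.range x := by
    intro i hi
    simp only [Finset.mem_image] at hi
    obtain ⟨b, hb, rfl⟩ := hi
    exact Finset.mem_range.mpr (h b hb)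
  have h3 : nu S ≤ ∑ i ∈ Finset.range x, 2 ^ i := by
    rw [← h1]
    exact Finset.sum_le_sum_of_subset h2
  have h4 : 1 ≤ 2 ^ x := Nat.one_le_two_pow
  rw [sum_range_two_pow] at h3
  omega

lemma two_pow_le_nu {S : Finset (Fin n)} {x : Fin n} (hx : x ∈ S) : 2 ^ (x : ℕ) ≤ nu S :=
  Finset.single_le_sum (f := fun y : Fin n => 2 ^ (y : ℕ)) (fun i _ => Nat.zero_le _) hx

/-! ### bottoms -/

def bottomP (t : ℕ) (F E : Finset (Fin n)) : Prop :=
  E ⊆ F ∧ E.card = t ∧ ∀ y ∈ F, y ∉ E → ∀ x ∈ E, x < y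

lemma exists_bottom : ∀ (t : ℕ) (F : Finset (Fin n)), t ≤ F.card → ∃ E, bottomP t F E := by
  intro t
  induction t with
  | zero => exact fun F _ => ⟨∅, Finset.empty_subset _, rfl, by simp⟩
  | succ k ih =>
    intro F hF
    have hne : F.Nonempty := Finset.card_pos.mp (by omega)
    set m := F.min' hne with hm
    have hmF : m ∈ F := F.min'_mem hne
    have hcard : k ≤ (F.erase m).card := by
      rw [Finset.card_erase_of_mem hmF]; omega
    obtain ⟨E', hE'sub, hE'card, hE'bot⟩ := ih (F.erase m) hcard
    have hmE' : m ∉ E' := fun h => (Finset.mem_erase.mp (hE'sub h)).1 rfl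
    refine ⟨insert m E', ?_, ?_, ?_⟩
    · exact Finset.insert_subset hmF (hE'sub.trans (F.erase_subset m))
    · rw [Finset.card_insert_of_notMem hmE', hE'card]
    · intro y hy hyE x hx
      have hym : y ≠ m := fun h => hyE (h ▸ Finset.mem_insert_self m E')
      have hyE' : y ∈ F.erase m := Finset.mem_erase.mpr ⟨hym, hy⟩
      have hyE'2 : y ∉ E' := fun h => hyE (Finset.mem_insert_of_mem h)
      rcases Finset.mem_insert.mp hx with rfl | hx'
      · exact lt_of_le_of_ne (F.min'_le y hy) (Ne.symm hym)
      · exact hE'bot y hyE' hyE'2 x hx'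

lemma nu_bottom_lt {t : ℕ} {F B E : Finset (Fin n)} (hB : bottomP t F B)
    (hE : E ⊆ F) (hEc : E.card = t) (hne : E ≠ B) : nu B < nu E := by
  obtain ⟨hBF, hBc, hbot⟩ := hB
  have hxe : ∃ x ∈ E, x ∉ B := by
    by_contra hc
    push_neg at hc
    exact hne (Finset.eq_of_subset_of_card_le hc (by omega))
  obtain ⟨x, hxE, hxB⟩ := hxe
  have hlt : ∀ b ∈ B, (b : ℕ) < (x : ℕ) := fun b hb => hbot x (hE hxE) hxB b hb
  exact lt_of_lt_of_le (nu_lt_two_pow hlt) (two_pow_le_nu hxE)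

lemma bottom_unique {t : ℕ} {F B B' : Finset (Fin n)} (hB : bottomP t F B)
    (hB' : bottomP t F B') : B = B' := by
  by_contra hne
  have h1 := nu_bottom_lt hB hB'.1 hB'.2.1 (Ne.symm hne)
  have h2 := nu_bottom_lt hB' hB.1 hB.2.1 hne
  omega

def elig (t : ℕ) (E : Finset (Fin n)) : Prop :=
  E.card = t ∧ ∃ x : Fin n, ∀ e ∈ E, e < x

lemma bottom_elig {t : ℕ} {F B : Finset (Fin n)} (hB : bottomP t F B)
    (hc : t < F.card) : elig t B := by
  obtain ⟨hBF, hBc, hbot⟩ := hB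
  refine ⟨hBc, ?_⟩
  have : ∃ y ∈ F, y ∉ B := by
    by_contra hcon
    push_neg at hcon
    have := Finset.card_le_card (fun y hy => hcon y hy)
    omega
  obtain ⟨y, hyF, hyB⟩ := this
  exact ⟨y, fun e he => hbot y hyF hyB e he⟩

/-! ### the full simplex has a simplicial order at any level -/

def bigC (t : ℕ) (R : Finset (Finset (Fin n))) : Set (Finset (Fin n)) :=
  {F | F.card ≤ t ∨ ∃ B ∈ R, bottomP t F B}

lemma simpOrder_bigC (t : ℕ) :
    ∀ (N : ℕ) (R : Finset (Finset (Fin n))), R.card ≤ N → (∀ E ∈ R, elig t E) →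
      ∃ L, IsSimpOrder t (bigC t R) L := by
  intro N
  induction N with
  | zero =>
    intro R hR _
    have hRe : R = ∅ := Finset.card_eq_zero.mp (Nat.le_zero.mp hR)
    subst hRe
    refine ⟨[], ?_⟩
    show bigC t ∅ = fullSkel n t
    ext F
    simp [bigC, fullSkel]
  | succ N ih =>
    intro R hRcard hR
    rcases R.eq_empty_or_nonempty with rfl | hne
    · exact ih ∅ (by simp) (by simp)
    obtain ⟨E, hER, hmin⟩ := R.exists_min_image nu hne
    obtain ⟨hEcard, w, hw⟩ := hR E hER
    set M : Finset (Fin n) := E ∪ Finset.univ.filter (fun x => ∀ e ∈ E, e < x) with hM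
    have hwM : w ∈ M := Finset.mem_union_right _ (Finset.mem_filter.mpr ⟨Finset.mem_univ _, hw⟩)
    have hwE : w ∉ E := fun h => lt_irrefl w (hw w h)
    have hEM : E ⊆ M := Finset.subset_union_left
    have hEMss : E ⊂ M := Finset.ssubset_iff_of_subset hEM |>.mpr ⟨w, hwM, hwE⟩
    have hMgt : t < M.card := hEcard ▸ Finset.card_lt_card hEMss
    have hbotM : bottomP t M E := by
      refine ⟨hEM, hEcard, ?_⟩
      intro y hy hyE x hx
      rcases Finset.mem_union.mp hy with h | h
      · exact absurd h hyE
      · exact (Finset.mem_filter.mp h).2 x hx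
    have hMC : M ∈ bigC t R := Or.inr ⟨E, hER, hbotM⟩
    -- key: every face of bigC containing E of size > t has bottom E and lies in M
    have keyA : ∀ F ∈ bigC t R, E ⊆ F → t < F.card → bottomP t F E ∧ F ⊆ M := by
      intro F hF hEF hFc
      rcases hF with h | ⟨B, hBR, hB⟩
      · omega
      have hBE : B = E := by
        by_contra hne'
        have h1 := nu_bottom_lt hB hEF hEcard (Ne.symm hne')
        have h2 := hmin B hBR
        omega
      subst hBE
      refine ⟨hB, ?_⟩
      intro y hy
      by_cases hyE : y ∈ B
      · exact hEM hyE
      · exact Finset.mem_union_right _ (Finset.mem_filter.mpr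
          ⟨Finset.mem_univ _, fun e he => hB.2.2 y hy hyE e he⟩)
    have hMfacet : IsFacet (bigC t R) M := by
      refine ⟨hMC, ?_⟩
      intro G hG hMG
      have hEG : E ⊆ G := hEM.trans hMG
      have hGc : t < G.card := lt_of_lt_of_le hMgt (Finset.card_le_card hMG)
      exact Finset.Subset.antisymm ((keyA G hG hEG hGc).2) hMG
    have hEC : E ∈ bigC t R := Or.inl (le_of_eq hEcard)
    have hfree : IsFreeFace (bigC t R) E := by
      refine ⟨hEC, M, ⟨hMfacet, hEM⟩, ?_⟩
      rintro P ⟨hPf, hEP⟩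
      by_cases hPc : t < P.card
      · exact (hPf.2 M hMC ((keyA P hPf.1 hEP hPc).2)).symm
      · push_neg at hPc
        exfalso
        have hPE : E = P := Finset.eq_of_subset_of_card_le hEP (by omega)
        have hPM : P ⊆ M := by rw [← hPE]; exact hEM
        have h5 : M.card = P.card := congrArg Finset.card (hPf.2 M hMC hPM)
        omega
    have hnotfacet : ¬ IsFacet (bigC t R) E := by
      intro hf
      have h5 : M.card = E.card := congrArg Finset.card (hf.2 M hMC hEM)
      omega
    have hdel : srDel (bigC t R) E = bigC t (R.erase E) := by
      ext F
      constructor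
      · rintro ⟨hF, hnss⟩
        by_cases hFc : F.card ≤ t
        · exact Or.inl hFc
        rcases hF with h | ⟨B, hBR, hB⟩
        · omega
        have hBE : B ≠ E := by
          rintro rfl
          refine hnss (Finset.ssubset_iff_subset_ne.mpr ⟨hB.1, ?_⟩)
          intro hBF
          exact hFc (hBF ▸ le_of_eq hB.2.1)
        exact Or.inr ⟨B, Finset.mem_erase.mpr ⟨hBE, hBR⟩, hB⟩
      · intro hF
        rcases hF with h | ⟨B, hBe, hB⟩
        · refine ⟨Or.inl h, ?_⟩
          intro hss
          have := Finset.card_lt_card hss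
          omega
        obtain ⟨hBne, hBR⟩ := Finset.mem_erase.mp hBe
        refine ⟨Or.inr ⟨B, hBR, hB⟩, ?_⟩
        intro hss
        have hFc : t < F.card := hEcard ▸ Finset.card_lt_card hss
        have hbotE := (keyA F (Or.inr ⟨B, hBR, hB⟩) hss.subset hFc).1
        exact hBne (bottom_unique hB hbotE)
    have hcard' : (R.erase E).card ≤ N := by
      rw [Finset.card_erase_of_mem hER]
      omega
    obtain ⟨L₂, hL₂⟩ := ih (R.erase E) hcard' (fun E' hE' => hR E' (Finset.mem_erase.mp hE').2)
    refine ⟨E :: L₂, hEcard, hfree, hnotfacet, ?_⟩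
    rw [hdel]
    exact hL₂

lemma simpOrder_univ (t : ℕ) :
    ∃ L, IsSimpOrder t (Set.univ : Set (Finset (Fin n))) L := by
  classical
  set R : Finset (Finset (Fin n)) := Finset.univ.filter (fun E => elig t E) with hR
  have heq : (Set.univ : Set (Finset (Fin n))) = bigC t R := by
    ext F
    simp only [Set.mem_univ, true_iff]
    by_cases hFc : F.card ≤ t
    · exact Or.inl hFc
    · push_neg at hFc
      obtain ⟨B, hB⟩ := exists_bottom t F (le_of_lt hFc)
      exact Or.inr ⟨B, Finset.mem_filter.mpr ⟨Finset.mem_univ _, bottom_elig hB hFc⟩, hB⟩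
  rw [heq]
  exact simpOrder_bigC t R.card R le_rfl (fun E hE => (Finset.mem_filter.mp hE).2)

/-! ### step-up machinery -/

def Steps (d : ℕ) (Γ : Set (Finset (Fin n))) :
    List (Finset (Fin n)) → Set (Finset (Fin n)) → Prop
  | [], Γ₂ => Γ₂ = Γ
  | E :: P, Γ₂ => E.card = d ∧ IsFreeFace Γ E ∧ ¬ IsFacet Γ E ∧ Steps d (srDel Γ E) P Γ₂

lemma steps_append {d : ℕ} :
    ∀ (P : List (Finset (Fin n))) (Γ Γ₂ : Set (Finset (Fin n))) (L : List (Finset (Fin n))),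
      Steps d Γ P Γ₂ → IsSimpOrder d Γ₂ L → IsSimpOrder d Γ (P ++ L) := by
  intro P
  induction P with
  | nil =>
    intro Γ Γ₂ L h h2
    have : Γ₂ = Γ := h
    rw [← this]
    exact h2
  | cons E P ih =>
    intro Γ Γ₂ L h h2
    obtain ⟨hc, hf, hnf, hs⟩ := h
    exact ⟨hc, hf, hnf, ih _ _ _ hs h2⟩

lemma exists_facet_above {Γ : Set (Finset (Fin n))} {G : Finset (Fin n)} (hG : G ∈ Γ) :
    ∃ M, IsFacet Γ M ∧ G ⊆ M := by
  have hfin : {H | H ∈ Γ ∧ G ⊆ H}.Finite := Set.toFinite _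
  have hne : {H | H ∈ Γ ∧ G ⊆ H}.Nonempty := ⟨G, hG, le_refl G⟩
  obtain ⟨M, ⟨hMΓ, hGM⟩, hmax⟩ := Set.Finite.exists_maximalFor id _ hfin hne
  refine ⟨M, ⟨hMΓ, ?_⟩, hGM⟩
  intro K hK hMK
  exact Finset.Subset.antisymm (hmax ⟨hK, hGM.trans hMK⟩ hMK) hMK

lemma srDel_isComplex {Γ : Set (Finset (Fin n))} (hΓ : IsComplex Γ) (E : Finset (Fin n)) :
    IsComplex (srDel Γ E) := by
  rintro F ⟨hF, hnss⟩ F' hF'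
  exact ⟨hΓ F hF F' hF', fun hss => hnss (hss.trans_subset hF')⟩

/-- The sub-deletion chain: delete all faces above `E` of cardinality `> d+1`
using free (d+1)-faces `insert x E`, `x ∈ T`. -/
lemma sub_chain (d : ℕ) :
    ∀ (N : ℕ) (T : Finset (Fin n)), T.card ≤ N → T.Nonempty →
    ∀ (Δ : Set (Finset (Fin n))) (E : Finset (Fin n)),
      IsComplex Δ → (∀ G : Finset (Fin n), G.card ≤ d + 1 → G ∈ Δ) →
      E.card = d → Disjoint E T → (E ∪ T) ∈ Δ →
      (∀ G ∈ Δ, E ⊆ G → d + 1 < G.card → G ⊆ E ∪ T) →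
      ∃ P, Steps (d + 1) Δ P {G ∈ Δ | E ⊆ G → G.card ≤ d + 1} := by
  intro N
  induction N with
  | zero =>
    intro T hTN hTne
    exfalso
    have := Finset.card_pos.mpr hTne
    omega
  | succ N ih =>
    intro T hTN hTne Δ E hΔ hskel hEcard hdisj hMΔ hH1
    by_cases hT1 : T.card = 1
    · -- base case: nothing above E has card > d+1, so the target is Δ itself
      refine ⟨[], ?_⟩
      show {G ∈ Δ | E ⊆ G → G.card ≤ d + 1} = Δ
      ext G
      simp only [Set.mem_setOf_eq, Set.mem_sep_iff, and_iff_left_iff_imp]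
      intro hG hEG
      by_contra hc
      push_neg at hc
      have hsub := hH1 G hG hEG hc
      have := Finset.card_le_card hsub
      rw [Finset.card_union_of_disjoint hdisj, hT1, hEcard] at this
      omega
    · obtain ⟨x, hxT⟩ := hTne
      have hxE : x ∉ E := fun h => Finset.disjoint_left.mp hdisj h hxT
      set E₁ : Finset (Fin n) := insert x E with hE₁
      have hE₁card : E₁.card = d + 1 := by
        rw [hE₁, Finset.card_insert_of_notMem hxE, hEcard]
      have hE₁Δ : E₁ ∈ Δ := hskel E₁ (le_of_eq hE₁card)
      have hETcard : d + 1 < (E ∪ T).card := by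
        rw [Finset.card_union_of_disjoint hdisj, hEcard]
        have h1 : 1 ≤ T.card := Finset.card_pos.mpr ⟨x, hxT⟩
        omega
      have hEET : E ⊆ E ∪ T := Finset.subset_union_left
      have hE₁ET : E₁ ⊆ E ∪ T :=
        Finset.insert_subset (Finset.mem_union_right _ hxT) hEET
      have hMfacet : IsFacet Δ (E ∪ T) := by
        refine ⟨hMΔ, ?_⟩
        intro G hG hMG
        have hGc : d + 1 < G.card := lt_of_lt_of_le hETcard (Finset.card_le_card hMG)
        exact Finset.Subset.antisymm (hH1 G hG (hEET.trans hMG) hGc) hMG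
      have hfree : IsFreeFace Δ E₁ := by
        refine ⟨hE₁Δ, E ∪ T, ⟨hMfacet, hE₁ET⟩, ?_⟩
        rintro P ⟨hPf, hE₁P⟩
        by_cases hPc : d + 1 < P.card
        · have hPM := hH1 P hPf.1 ((Finset.subset_insert x E).trans hE₁P) hPc
          exact (hPf.2 _ hMΔ hPM).symm
        · push_neg at hPc
          exfalso
          have hPE : E₁ = P := Finset.eq_of_subset_of_card_le hE₁P (by omega)
          have hPM : P ⊆ E ∪ T := by rw [← hPE]; exact hE₁ET
          have h5 := congrArg Finset.card (hPf.2 _ hMΔ hPM)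
          rw [← hPE, hE₁card] at h5
          omega
      have hnotfacet : ¬ IsFacet Δ E₁ := by
        intro hf
        have h5 := congrArg Finset.card (hf.2 _ hMΔ hE₁ET)
        rw [hE₁card] at h5
        omega
      -- new data for the IH
      have hT2 : 2 ≤ T.card := by
        have := Finset.card_pos.mpr ⟨x, hxT⟩
        omega
      have hTe_ne : (T.erase x).Nonempty := by
        rw [← Finset.card_pos, Finset.card_erase_of_mem hxT]
        omega
      have hTeN : (T.erase x).card ≤ N := by
        rw [Finset.card_erase_of_mem hxT]
        omega
      have hΔ₂ := srDel_isComplex hΔ E₁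
      have hskel₂ : ∀ G : Finset (Fin n), G.card ≤ d + 1 → G ∈ srDel Δ E₁ := by
        intro G hGc
        refine ⟨hskel G hGc, ?_⟩
        intro hss
        have := Finset.card_lt_card hss
        omega
      have hdisj₂ : Disjoint E (T.erase x) := hdisj.mono_right (Finset.erase_subset x T)
      have hsub₂ : E ∪ T.erase x ⊆ E ∪ T :=
        Finset.union_subset_union_right (Finset.erase_subset x T)
      have hxnot : x ∉ E ∪ T.erase x := by
        simp only [Finset.mem_union, Finset.mem_erase]
        push_neg
        exact ⟨hxE, fun h _ => absurd rfl h⟩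
      have hMΔ₂ : E ∪ T.erase x ∈ srDel Δ E₁ := by
        refine ⟨hΔ _ hMΔ _ hsub₂, ?_⟩
        intro hss
        exact hxnot (hss.subset (Finset.mem_insert_self x E))
      have hH1₂ : ∀ G ∈ srDel Δ E₁, E ⊆ G → d + 1 < G.card → G ⊆ E ∪ T.erase x := by
        rintro G ⟨hG, hnss⟩ hEG hGc
        have hGET := hH1 G hG hEG hGc
        have hxG : x ∉ G := by
          intro hxG
          apply hnss
          refine Finset.ssubset_iff_subset_ne.mpr ⟨Finset.insert_subset hxG hEG, ?_⟩
          intro hE₁G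
          rw [← hE₁G, hE₁card] at hGc
          omega
        intro y hyG
        rcases Finset.mem_union.mp (hGET hyG) with h | h
        · exact Finset.mem_union_left _ h
        · exact Finset.mem_union_right _
            (Finset.mem_erase.mpr ⟨fun hyx => hxG (hyx ▸ hyG), h⟩)
      obtain ⟨P₂, hP₂⟩ := ih (T.erase x) hTeN hTe_ne (srDel Δ E₁) E hΔ₂ hskel₂ hEcard
        hdisj₂ hMΔ₂ hH1₂
      have hfinals : {G ∈ srDel Δ E₁ | E ⊆ G → G.card ≤ d + 1}
          = {G ∈ Δ | E ⊆ G → G.card ≤ d + 1} := by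
        ext G
        simp only [Set.mem_sep_iff, srDel, Set.mem_setOf_eq]
        constructor
        · rintro ⟨⟨hG, _⟩, himp⟩
          exact ⟨hG, himp⟩
        · rintro ⟨hG, himp⟩
          refine ⟨⟨hG, ?_⟩, himp⟩
          intro hss
          have hEG : E ⊆ G := (Finset.subset_insert x E).trans hss.subset
          have hcard := Finset.card_lt_card hss
          rw [hE₁card] at hcard
          have := himp hEG
          omega
      rw [hfinals] at hP₂
      exact ⟨E₁ :: P₂, hE₁card, hfree, hnotfacet, hP₂⟩

lemma fullSkel_union_isComplex {Γ : Set (Finset (Fin n))} (hΓ : IsComplex Γ) (m : ℕ) :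
    IsComplex (Γ ∪ fullSkel n m) := by
  rintro F (hF | hF) F' hF'
  · exact Or.inl (hΓ F hF F' hF')
  · exact Or.inr (le_trans (Finset.card_le_card hF') hF)

lemma stepUp (d : ℕ) :
    ∀ (L : List (Finset (Fin n))) (Γ : Set (Finset (Fin n))), IsComplex Γ →
      IsSimpOrder d Γ L → ∃ L', IsSimpOrder (d + 1) (Γ ∪ fullSkel n (d + 1)) L' := by
  intro L
  induction L with
  | nil =>
    intro Γ _ h
    have hΓ : Γ = fullSkel n d := h
    refine ⟨[], ?_⟩
    show Γ ∪ fullSkel n (d + 1) = fullSkel n (d + 1)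
    rw [hΓ]
    ext F
    simp only [fullSkel, Set.mem_union, Set.mem_setOf_eq]
    omega
  | cons E L₂ ih =>
    intro Γ hΓc h
    obtain ⟨hEcard, ⟨hEΓ, hex⟩, hnotfacet, hrest⟩ := h
    obtain ⟨M, ⟨hMf, hEM⟩, huniq⟩ := hex
    have hEneM : E ≠ M := by
      intro h'
      exact hnotfacet (h' ▸ hMf)
    have habove : ∀ G ∈ Γ, E ⊆ G → G ⊆ M := by
      intro G hG hEG
      obtain ⟨P, hPf, hGP⟩ := exists_facet_above hG
      have := huniq P ⟨hPf, hEG.trans hGP⟩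
      exact this ▸ hGP
    set T : Finset (Fin n) := M \ E with hT
    have hTne : T.Nonempty := Finset.sdiff_nonempty.mpr
      (fun h' => hEneM (Finset.Subset.antisymm hEM h'))
    have hET : E ∪ T = M := Finset.union_sdiff_of_subset hEM
    set Δ : Set (Finset (Fin n)) := Γ ∪ fullSkel n (d + 1) with hΔdef
    have hΔc : IsComplex Δ := fullSkel_union_isComplex hΓc (d + 1)
    have hskel : ∀ G : Finset (Fin n), G.card ≤ d + 1 → G ∈ Δ := fun G hG => Or.inr hG
    have hdisj : Disjoint E T := Finset.disjoint_sdiff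
    have hMΔ : E ∪ T ∈ Δ := by rw [hET]; exact Or.inl hMf.1
    have hH1 : ∀ G ∈ Δ, E ⊆ G → d + 1 < G.card → G ⊆ E ∪ T := by
      rintro G (hG | hG) hEG hGc
      · rw [hET]; exact habove G hG hEG
      · exact absurd hG (by simp only [fullSkel, Set.mem_setOf_eq]; omega)
    obtain ⟨P, hsteps⟩ := sub_chain d T.card T le_rfl hTne Δ E hΔc hskel hEcard hdisj hMΔ hH1
    have hfinal : {G ∈ Δ | E ⊆ G → G.card ≤ d + 1}
        = srDel Γ E ∪ fullSkel n (d + 1) := by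
      ext F
      simp only [Set.mem_sep_iff, hΔdef, Set.mem_union, srDel, Set.mem_setOf_eq, fullSkel]
      constructor
      · rintro ⟨hF | hF, himp⟩
        · by_cases hFc : F.card ≤ d + 1
          · exact Or.inr hFc
          · refine Or.inl ⟨hF, ?_⟩
            intro hss
            exact hFc (himp hss.subset)
        · exact Or.inr hF
      · rintro (⟨hF, hnss⟩ | hF)
        · refine ⟨Or.inl hF, ?_⟩
          intro hEF
          by_contra hc
          push_neg at hc
          refine hnss (Finset.ssubset_iff_subset_ne.mpr ⟨hEF, ?_⟩)
          intro hEFeq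
          rw [← hEFeq, hEcard] at hc
          omega
        · exact ⟨Or.inr hF, fun _ => hF⟩
    rw [hfinal] at hsteps
    obtain ⟨L₂', hL₂'⟩ := ih (srDel Γ E) (srDel_isComplex hΓc E) hrest
    exact ⟨P ++ L₂', steps_append P _ _ L₂' hsteps hL₂'⟩

lemma skel_subset_of_simpOrder {d : ℕ} :
    ∀ (L : List (Finset (Fin n))) (Γ : Set (Finset (Fin n))), IsSimpOrder d Γ L →
      ∀ F : Finset (Fin n), F.card ≤ d → F ∈ Γ := by
  intro L
  induction L with
  | nil =>
    intro Γ h F hF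
    have hΓ : Γ = fullSkel n d := h
    rw [hΓ]
    exact hF
  | cons E L₂ ih =>
    intro Γ h F hF
    obtain ⟨_, _, _, hrest⟩ := h
    exact (ih (srDel Γ E) hrest F hF).1

lemma stepUpMany (d : ℕ) (Γ : Set (Finset (Fin n))) (hΓ : IsComplex Γ)
    (h : ∃ L, IsSimpOrder d Γ L) :
    ∀ k, ∃ L', IsSimpOrder (d + k) (Γ ∪ fullSkel n (d + k)) L' := by
  intro k
  induction k with
  | zero =>
    obtain ⟨L, hL⟩ := h
    have : Γ ∪ fullSkel n (d + 0) = Γ := by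
      apply Set.union_eq_self_of_subset_right
      intro F hF
      exact skel_subset_of_simpOrder L Γ hL F hF
    rw [this]
    exact ⟨L, hL⟩
  | succ k ihk =>
    obtain ⟨L, hL⟩ := ihk
    have hc : IsComplex (Γ ∪ fullSkel n (d + k)) := fullSkel_union_isComplex hΓ (d + k)
    obtain ⟨L', hL'⟩ := stepUp (d + k) L _ hc hL
    have : Γ ∪ fullSkel n (d + k) ∪ fullSkel n (d + k + 1)
        = Γ ∪ fullSkel n (d + (k + 1)) := by
      ext F
      simp only [Set.mem_union, fullSkel, Set.mem_setOf_eq]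
      constructor
      · rintro ((h | h) | h)
        · exact Or.inl h
        · exact Or.inr (by omega)
        · exact Or.inr (by omega)
      · rintro (h | h)
        · exact Or.inl (Or.inl h)
        · exact Or.inr (by omega)
    rw [this] at hL'
    exact ⟨L', hL'⟩

/-! ### closure computations -/

lemma dClosure_eq_univ {d t : ℕ} {Γ : Set (Finset (Fin n))} (h : t < d)
    (hclo : Γ = dClosure d Γ) : dClosure t Γ = Set.univ := by
  ext F
  simp only [Set.mem_univ, iff_true, dClosure, Set.mem_setOf_eq]
  right
  intro G _ hGcard
  rw [hclo]
  exact Or.inl (by omega)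

lemma dClosure_eq_union {d t : ℕ} {Γ : Set (Finset (Fin n))} (hΓ : IsComplex Γ)
    (h : d ≤ t) (hclo : Γ = dClosure d Γ) : dClosure t Γ = Γ ∪ fullSkel n t := by
  ext F
  simp only [dClosure, Set.mem_setOf_eq, Set.mem_union, fullSkel]
  constructor
  · rintro (hF | hF)
    · exact Or.inr hF
    by_cases hFc : F.card ≤ t
    · exact Or.inr hFc
    push_neg at hFc
    left
    rw [hclo]
    right
    intro G hGF hGcard
    obtain ⟨H, hGH, hHF, hHcard⟩ := Finset.exists_subsuperset_card_eq (n := t + 1) hGF (by omega) (by omega)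
    have hHc : H.card = t + 1 := by omega
    exact hΓ H (hF H hHF hHc) G hGH
  · rintro (hF | hF)
    · right
      intro G hGF _
      exact hΓ F hF G hGF
    · exact Or.inl hF

end Stmt10Aux

open ChordalPaper in
/-- a `d`-closure is chordal iff it is `d`-chordal. -/
theorem stmt10 (n d : ℕ) (hd : 1 ≤ d) (Γ : Set (Finset (Fin n))) (hΓ : IsComplex Γ)
    (hclo : Γ = dClosure d Γ) :
    (∀ t, 1 ≤ t → DChordal t Γ) ↔ DChordal d Γ := by
  constructor
  · exact fun h => h d hd
  · intro h t ht
    have hΓord : ∃ L, IsSimpOrder d Γ L := by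
      rw [hclo]
      exact h
    unfold DChordal
    rcases lt_or_ge t d with hlt | hle
    · rw [Stmt10Aux.dClosure_eq_univ hlt hclo]
      exact Stmt10Aux.simpOrder_univ t
    · obtain ⟨k, rfl⟩ : ∃ k, t = d + k := ⟨t - d, by omega⟩
      rw [Stmt10Aux.dClosure_eq_union hΓ hle hclo]
      exact Stmt10Aux.stepUpMany d Γ hΓ hΓord k
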